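/- Let a = 3π/4. For ρ ∈ (0,1), λ > 0, t_0 > 0 define f_{2+}(ρ) = (e^{ia} e^{2iaρ}/(2πi ρ λ² t_0^{ρ+1})) ∫_1^∞ e^{(i-1) s^{1/ρ}/√2} s^{1/ρ + 1} (s e^{iaρ} + λ t_0^ρ)^{-1} ds and f_{2-}(ρ) = (e^{-ia} e^{-2iaρ}/(2πi ρ λ² t_0^{ρ+1})) ∫_1^∞ e^{(-i-1) s^{1/ρ}/√2} s^{1/ρ + 1} (s e^{-iaρ} + λ t_0^ρ)^{-1} ds. Then for every ρ_0 ∈ (0,1) and λ_1 > 0 there exist constants C > 0 and T_0 > 1 depending only on ρ_0 and λ_1 such that for all t_0 ≥ T_0, all λ ≥ λ_1, and all ρ ∈ [ρ_0, 1), f_{2±} are differentiable at ρ and |f_{2±}'(ρ)| ≤ C (1/ρ + ln t_0) / (λ³ t_0^{2ρ+1}). -/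

import Mathlib

open MeasureTheory Complex

/-- The contribution of the ray `arg ζ = 3πρ/4`, `|ζ| ≥ 1`, of the Hankel contour
`δ(1; 3πρ/4)` in the integral representation of `t₀^{ρ-1} E_{ρ,ρ}(-λ t₀^ρ)`, `a = 3π/4`:
`f₂₊(ρ) = (e^{ia} e^{2iaρ}/(2πi ρ λ² t₀^{ρ+1})) ∫_1^∞ e^{(i-1)s^{1/ρ}/√2} s^{1/ρ+1}
(s e^{iaρ} + λ t₀^ρ)⁻¹ ds`. -/
noncomputable def f2plus (lam t₀ ρ : ℝ) : ℂ :=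
  Complex.exp (Complex.I * ((3 * Real.pi / 4 : ℝ) : ℂ)) *
      Complex.exp (2 * Complex.I * ((3 * Real.pi / 4 : ℝ) : ℂ) * (ρ : ℂ)) /
      (2 * ((Real.pi : ℝ) : ℂ) * Complex.I * (ρ : ℂ) * ((lam ^ 2 * t₀ ^ (ρ + 1) : ℝ) : ℂ)) *
    ∫ s in Set.Ioi (1 : ℝ),
      Complex.exp ((Complex.I - 1) * ((s ^ (1 / ρ) : ℝ) : ℂ) / ((Real.sqrt 2 : ℝ) : ℂ)) *
        ((s ^ (1 / ρ + 1) : ℝ) : ℂ) /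
        ((s : ℂ) * Complex.exp (Complex.I * ((3 * Real.pi / 4 : ℝ) : ℂ) * (ρ : ℂ)) +
          ((lam * t₀ ^ ρ : ℝ) : ℂ))

/-- The contribution of the ray `arg ζ = -3πρ/4`, `|ζ| ≥ 1`, of the Hankel contour:
`f₂₋(ρ) = (e^{-ia} e^{-2iaρ}/(2πi ρ λ² t₀^{ρ+1})) ∫_1^∞ e^{(-i-1)s^{1/ρ}/√2} s^{1/ρ+1}
(s e^{-iaρ} + λ t₀^ρ)⁻¹ ds`. -/
noncomputable def f2minus (lam t₀ ρ : ℝ) : ℂ :=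
  Complex.exp (-(Complex.I * ((3 * Real.pi / 4 : ℝ) : ℂ))) *
      Complex.exp (-(2 * Complex.I * ((3 * Real.pi / 4 : ℝ) : ℂ) * (ρ : ℂ))) /
      (2 * ((Real.pi : ℝ) : ℂ) * Complex.I * (ρ : ℂ) * ((lam ^ 2 * t₀ ^ (ρ + 1) : ℝ) : ℂ)) *
    ∫ s in Set.Ioi (1 : ℝ),
      Complex.exp ((-Complex.I - 1) * ((s ^ (1 / ρ) : ℝ) : ℂ) / ((Real.sqrt 2 : ℝ) : ℂ)) *
        ((s ^ (1 / ρ + 1) : ℝ) : ℂ) /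
        ((s : ℂ) * Complex.exp (-(Complex.I * ((3 * Real.pi / 4 : ℝ) : ℂ) * (ρ : ℂ))) +
          ((lam * t₀ ^ ρ : ℝ) : ℂ))

namespace St13

open Set



/-- complex number `e^{iσa}e^{2iσaρ}/(2πiρ λ² t₀^{ρ+1})` -/
noncomputable def pre (σ lam t₀ ρ : ℝ) : ℂ :=
  Complex.exp ((σ : ℂ) * (Complex.I * ((3 * Real.pi / 4 : ℝ) : ℂ))) *
      Complex.exp ((σ : ℂ) * (2 * Complex.I * ((3 * Real.pi / 4 : ℝ) : ℂ) * (ρ : ℂ))) /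
      (2 * ((Real.pi : ℝ) : ℂ) * Complex.I * (ρ : ℂ) * ((lam ^ 2 * t₀ ^ (ρ + 1) : ℝ) : ℂ))

noncomputable def ig (σ lam t₀ ρ s : ℝ) : ℂ :=
  Complex.exp (((σ : ℂ) * Complex.I - 1) * ((s ^ (1 / ρ) : ℝ) : ℂ) / ((Real.sqrt 2 : ℝ) : ℂ)) *
    ((s ^ (1 / ρ + 1) : ℝ) : ℂ) /
    ((s : ℂ) * Complex.exp ((σ : ℂ) * (Complex.I * ((3 * Real.pi / 4 : ℝ) : ℂ) * (ρ : ℂ))) +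
      ((lam * t₀ ^ ρ : ℝ) : ℂ))

lemma f2plus_eq (lam t₀ : ℝ) :
    f2plus lam t₀ = fun ρ => pre 1 lam t₀ ρ * ∫ s in Set.Ioi (1 : ℝ), ig 1 lam t₀ ρ s := by
  funext ρ
  simp only [f2plus, pre, ig, Complex.ofReal_one, one_mul]

lemma f2minus_eq (lam t₀ : ℝ) :
    f2minus lam t₀ = fun ρ => pre (-1) lam t₀ ρ * ∫ s in Set.Ioi (1 : ℝ), ig (-1) lam t₀ ρ s := by
  funext ρ
  simp only [f2minus, pre, ig, Complex.ofReal_neg, Complex.ofReal_one, neg_one_mul, neg_mul,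
    one_mul]



noncomputable def preD (σ lam t₀ ρ : ℝ) : ℂ :=
  pre σ lam t₀ ρ *
    ((σ : ℂ) * (2 * Complex.I * ((3 * Real.pi / 4 : ℝ) : ℂ)) -
      (1 / (ρ : ℂ) + ((Real.log t₀ : ℝ) : ℂ)))

noncomputable def igd (σ lam t₀ ρ s : ℝ) : ℂ :=
  ig σ lam t₀ ρ s *
    (((σ : ℂ) * Complex.I - 1) * ((-(s ^ (1 / ρ) * Real.log s / ρ ^ 2) : ℝ) : ℂ) /
        ((Real.sqrt 2 : ℝ) : ℂ) +
      ((-(Real.log s / ρ ^ 2) : ℝ) : ℂ) -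
      ((s : ℂ) * Complex.exp ((σ : ℂ) * (Complex.I * ((3 * Real.pi / 4 : ℝ) : ℂ) * (ρ : ℂ))) *
          ((σ : ℂ) * (Complex.I * ((3 * Real.pi / 4 : ℝ) : ℂ))) +
          ((lam * (t₀ ^ ρ * Real.log t₀) : ℝ) : ℂ)) /
        ((s : ℂ) * Complex.exp ((σ : ℂ) * (Complex.I * ((3 * Real.pi / 4 : ℝ) : ℂ) * (ρ : ℂ))) +
          ((lam * t₀ ^ ρ : ℝ) : ℂ)))


lemma hasDerivAt_ofReal (ρ : ℝ) : HasDerivAt (fun x : ℝ => (x : ℂ)) 1 ρ := by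
  simpa using (hasDerivAt_id ρ).ofReal_comp

lemma abstract1 (E1 E2 k ρc W L c : ℂ) (hk : k ≠ 0) (hρ : ρc ≠ 0) (hW : W ≠ 0) :
    E1 * E2 / (k * ρc * W) * (c - (1 / ρc + L)) =
      (E1 * (E2 * (c * 1)) * (k * ρc * W) - E1 * E2 * (k * 1 * W + k * ρc * (W * L))) /
        (k * ρc * W) ^ 2 := by
  field_simp

lemma abstract2 (E v vv' v' u' sq c D D' : ℂ) (hD : D ≠ 0) (hsq : sq ≠ 0)
    (hv' : v' = v * vv') :
    E * v / D * (c * u' / sq + vv' - D' / D) =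
      ((E * (c * u' / sq) * v + E * v') * D - E * v * D') / D ^ 2 := by
  subst hv'
  field_simp

lemma hasDerivAt_pre {σ lam t₀ ρ : ℝ} (hρ : 0 < ρ) (hl : 0 < lam) (ht : 0 < t₀) :
    HasDerivAt (fun x => pre σ lam t₀ x) (preD σ lam t₀ ρ) ρ := by
  have hπ : (0:ℝ) < Real.pi := Real.pi_pos
  have hW : HasDerivAt (fun x : ℝ => lam ^ 2 * t₀ ^ (x + 1))
      (lam ^ 2 * (t₀ ^ (ρ + 1) * Real.log t₀)) ρ := by
    have h1 : HasDerivAt (fun x : ℝ => t₀ ^ (x + 1)) (t₀ ^ (ρ + 1) * Real.log t₀) ρ := by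
      have h2 := ((Real.hasStrictDerivAt_const_rpow ht (ρ + 1)).hasDerivAt).comp ρ
        ((hasDerivAt_id ρ).add_const 1)
      simpa [Function.comp_def] using h2
    simpa [mul_assoc] using h1.const_mul (lam ^ 2)
  have hN2 : HasDerivAt
      (fun x : ℝ => Complex.exp ((σ : ℂ) * (2 * Complex.I * ((3 * Real.pi / 4 : ℝ) : ℂ) * (x : ℂ))))
      (Complex.exp ((σ : ℂ) * (2 * Complex.I * ((3 * Real.pi / 4 : ℝ) : ℂ) * (ρ : ℂ))) *
        ((σ : ℂ) * (2 * Complex.I * ((3 * Real.pi / 4 : ℝ) : ℂ)) * 1)) ρ := by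
    have heq : (fun x : ℝ => (σ : ℂ) * (2 * Complex.I * ((3 * Real.pi / 4 : ℝ) : ℂ) * (x : ℂ))) =
        fun x : ℝ => ((σ : ℂ) * (2 * Complex.I * ((3 * Real.pi / 4 : ℝ) : ℂ))) * (x : ℂ) := by
      funext x; ring
    have h0 : HasDerivAt
        (fun x : ℝ => (σ : ℂ) * (2 * Complex.I * ((3 * Real.pi / 4 : ℝ) : ℂ) * (x : ℂ)))
        ((σ : ℂ) * (2 * Complex.I * ((3 * Real.pi / 4 : ℝ) : ℂ)) * 1) ρ := by
      rw [heq]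
      exact (hasDerivAt_ofReal ρ).const_mul _
    exact h0.cexp
  have hNum := hN2.const_mul (Complex.exp ((σ : ℂ) * (Complex.I * ((3 * Real.pi / 4 : ℝ) : ℂ))))
  have hDen : HasDerivAt
      (fun x : ℝ => 2 * ((Real.pi : ℝ) : ℂ) * Complex.I * (x : ℂ) *
        ((lam ^ 2 * t₀ ^ (x + 1) : ℝ) : ℂ))
      ((2 * ((Real.pi : ℝ) : ℂ) * Complex.I * 1) * ((lam ^ 2 * t₀ ^ (ρ + 1) : ℝ) : ℂ) +
        (2 * ((Real.pi : ℝ) : ℂ) * Complex.I * (ρ : ℂ)) *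
          ((lam ^ 2 * (t₀ ^ (ρ + 1) * Real.log t₀) : ℝ) : ℂ)) ρ := by
    exact ((hasDerivAt_ofReal ρ).const_mul (2 * ((Real.pi : ℝ) : ℂ) * Complex.I)).mul
      hW.ofReal_comp
  have hWpos : (0:ℝ) < lam ^ 2 * t₀ ^ (ρ + 1) := by positivity
  have hDne : 2 * ((Real.pi : ℝ) : ℂ) * Complex.I * (ρ : ℂ) *
      ((lam ^ 2 * t₀ ^ (ρ + 1) : ℝ) : ℂ) ≠ 0 := by
    apply mul_ne_zero
    apply mul_ne_zero
    apply mul_ne_zero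
    apply mul_ne_zero
    · norm_num
    · exact_mod_cast Real.pi_ne_zero
    · exact Complex.I_ne_zero
    · exact_mod_cast ne_of_gt hρ
    · exact_mod_cast ne_of_gt hWpos
  have hG := hNum.div hDen hDne
  refine hG.congr_deriv (Eq.symm ?_)
  unfold preD pre
  have hρc : (ρ : ℂ) ≠ 0 := by exact_mod_cast ne_of_gt hρ
  have hWc : ((lam ^ 2 * t₀ ^ (ρ + 1) : ℝ) : ℂ) ≠ 0 := by exact_mod_cast ne_of_gt hWpos
  have hπc : ((Real.pi : ℝ) : ℂ) ≠ 0 := by exact_mod_cast Real.pi_ne_zero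
  have hIne : Complex.I ≠ 0 := Complex.I_ne_zero
  have e1 : ((lam ^ 2 * (t₀ ^ (ρ + 1) * Real.log t₀) : ℝ) : ℂ) =
      ((lam ^ 2 * t₀ ^ (ρ + 1) : ℝ) : ℂ) * ((Real.log t₀ : ℝ) : ℂ) := by push_cast; ring
  rw [e1]
  refine abstract1 _ _ _ _ _ _ _ ?_ hρc hWc
  intro h
  rw [mul_eq_zero, mul_eq_zero] at h
  rcases h with (h | h) | h
  · norm_num at h
  · exact hπc h
  · exact hIne h

lemma hasDerivAt_ig {σ lam t₀ ρ : ℝ} (s : ℝ) (hρ0 : 0 < ρ) (hs : 1 ≤ s) (hl : 0 < lam)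
    (ht : 0 < t₀)
    (hDne : (s : ℂ) * Complex.exp ((σ : ℂ) * (Complex.I * ((3 * Real.pi / 4 : ℝ) : ℂ) * (ρ : ℂ))) +
      ((lam * t₀ ^ ρ : ℝ) : ℂ) ≠ 0) :
    HasDerivAt (fun x => ig σ lam t₀ x s) (igd σ lam t₀ ρ s) ρ := by
  have hs0 : (0:ℝ) < s := lt_of_lt_of_le one_pos hs
  have hinv : HasDerivAt (fun x : ℝ => 1 / x) (-(1 / ρ ^ 2)) ρ := by
    simpa [one_div] using hasDerivAt_inv (ne_of_gt hρ0)
  have hu : HasDerivAt (fun x : ℝ => s ^ (1 / x)) (-(s ^ (1 / ρ) * Real.log s / ρ ^ 2)) ρ := by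
    have h := (hasDerivAt_const ρ s).rpow hinv hs0
    convert h using 1
    ring
  have hv : HasDerivAt (fun x : ℝ => s ^ (1 / x + 1)) (-(s ^ (1 / ρ + 1) * Real.log s / ρ ^ 2))
      ρ := by
    have h := (hasDerivAt_const ρ s).rpow (hinv.add_const 1) hs0
    convert h using 1
    ring
  have hargE : HasDerivAt
      (fun x : ℝ => ((σ : ℂ) * Complex.I - 1) * ((s ^ (1 / x) : ℝ) : ℂ) / ((Real.sqrt 2 : ℝ) : ℂ))
      (((σ : ℂ) * Complex.I - 1) * ((-(s ^ (1 / ρ) * Real.log s / ρ ^ 2) : ℝ) : ℂ) /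
        ((Real.sqrt 2 : ℝ) : ℂ)) ρ :=
    ((hu.ofReal_comp).const_mul _).div_const _
  have hE := hargE.cexp
  have hNum := hE.mul hv.ofReal_comp
  have hexp : HasDerivAt
      (fun x : ℝ => Complex.exp ((σ : ℂ) * (Complex.I * ((3 * Real.pi / 4 : ℝ) : ℂ) * (x : ℂ))))
      (Complex.exp ((σ : ℂ) * (Complex.I * ((3 * Real.pi / 4 : ℝ) : ℂ) * (ρ : ℂ))) *
        ((σ : ℂ) * (Complex.I * ((3 * Real.pi / 4 : ℝ) : ℂ)) * 1)) ρ := by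
    have h0 : HasDerivAt
        (fun x : ℝ => (σ : ℂ) * (Complex.I * ((3 * Real.pi / 4 : ℝ) : ℂ) * (x : ℂ)))
        ((σ : ℂ) * (Complex.I * ((3 * Real.pi / 4 : ℝ) : ℂ)) * 1) ρ := by
      have heq : (fun x : ℝ => (σ : ℂ) * (Complex.I * ((3 * Real.pi / 4 : ℝ) : ℂ) * (x : ℂ))) =
          fun x : ℝ => ((σ : ℂ) * (Complex.I * ((3 * Real.pi / 4 : ℝ) : ℂ))) * (x : ℂ) := by
        funext x; ring
      rw [heq]
      exact (hasDerivAt_ofReal ρ).const_mul _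
    exact h0.cexp
  have hr : HasDerivAt (fun x : ℝ => lam * t₀ ^ x) (lam * (t₀ ^ ρ * Real.log t₀)) ρ :=
    ((Real.hasStrictDerivAt_const_rpow ht ρ).hasDerivAt).const_mul lam
  have hDen := (hexp.const_mul (s : ℂ)).add hr.ofReal_comp
  have hG := hNum.div hDen hDne
  refine hG.congr_deriv (Eq.symm ?_)
  unfold igd ig
  have e1 : ((-(s ^ (1 / ρ + 1) * Real.log s / ρ ^ 2) : ℝ) : ℂ) =
      ((s ^ (1 / ρ + 1) : ℝ) : ℂ) * ((-(Real.log s / ρ ^ 2) : ℝ) : ℂ) := by push_cast; ring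
  have e2 : (s : ℂ) *
        Complex.exp ((σ : ℂ) * (Complex.I * ((3 * Real.pi / 4 : ℝ) : ℂ) * (ρ : ℂ))) *
          ((σ : ℂ) * (Complex.I * ((3 * Real.pi / 4 : ℝ) : ℂ))) +
        ((lam * (t₀ ^ ρ * Real.log t₀) : ℝ) : ℂ) =
      (s : ℂ) * (Complex.exp ((σ : ℂ) * (Complex.I * ((3 * Real.pi / 4 : ℝ) : ℂ) * (ρ : ℂ))) *
          ((σ : ℂ) * (Complex.I * ((3 * Real.pi / 4 : ℝ) : ℂ)) * 1)) +
        ((lam * (t₀ ^ ρ * Real.log t₀) : ℝ) : ℂ) := by ring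
  rw [e2]
  have hsq : ((Real.sqrt 2 : ℝ) : ℂ) ≠ 0 := by
    have : (0:ℝ) < Real.sqrt 2 := by positivity
    exact_mod_cast ne_of_gt this
  exact abstract2 _ _ _ _ _ _ _ _ _ hDne hsq e1


lemma norm_exp_re (x y : ℝ) : ‖Complex.exp ((x : ℂ) + (y : ℂ) * Complex.I)‖ = Real.exp x := by
  rw [Complex.norm_exp]
  simp

lemma den_lb {s r φ : ℝ} (hs : 0 ≤ s) (hr : 0 ≤ r) (hφ : -(Real.sqrt 2)/2 ≤ Real.cos φ) :
    s / 2 ≤ ‖(s : ℂ) * Complex.exp (Complex.I * (φ : ℂ)) + (r : ℂ)‖ ∧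
    r / 2 ≤ ‖(s : ℂ) * Complex.exp (Complex.I * (φ : ℂ)) + (r : ℂ)‖ := by
  set z := (s : ℂ) * Complex.exp (Complex.I * (φ : ℂ)) + (r : ℂ) with hzdef
  have hz : z = ((s * Real.cos φ + r : ℝ) : ℂ) + ((s * Real.sin φ : ℝ) : ℂ) * Complex.I := by
    rw [hzdef, mul_comm Complex.I ((φ : ℝ) : ℂ), Complex.exp_mul_I]
    push_cast
    ring
  have hnz : ‖z‖ ^ 2 = (s * Real.cos φ + r) ^ 2 + (s * Real.sin φ) ^ 2 := by
    rw [hz, Complex.norm_add_mul_I,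
      Real.sq_sqrt (by positivity)]
  have hpyth := Real.sin_sq_add_cos_sq φ
  have hsqrt2 : Real.sqrt 2 ≤ 1.5 := by
    rw [show (1.5 : ℝ) = Real.sqrt (1.5 ^ 2) by rw [Real.sqrt_sq]; norm_num]
    apply Real.sqrt_le_sqrt; norm_num
  have hsqrt2' : (0:ℝ) ≤ Real.sqrt 2 := Real.sqrt_nonneg 2
  have hcos : Real.cos φ ≤ 1 := Real.cos_le_one φ
  have h1 : (s ^ 2 + r ^ 2) / 4 ≤ ‖z‖ ^ 2 := by
    rw [hnz]
    nlinarith [sq_nonneg (s - r), sq_nonneg (s + r), mul_nonneg hs hr]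
  have hz0 : (0:ℝ) ≤ ‖z‖ := norm_nonneg z
  constructor
  · nlinarith [sq_nonneg (‖z‖ - s / 2), sq_nonneg r]
  · nlinarith [sq_nonneg (‖z‖ - r / 2), sq_nonneg s]

lemma norm_c {σ : ℝ} (hσ : σ = 1 ∨ σ = -1) : ‖(σ : ℂ) * Complex.I - 1‖ = Real.sqrt 2 := by
  rcases hσ with h | h <;> subst h <;>
    · rw [Complex.norm_def]
      push_cast
      congr 1
      simp [Complex.normSq_apply]
      norm_num

lemma norm_sigma {σ : ℝ} (hσ : σ = 1 ∨ σ = -1) : ‖(σ : ℂ)‖ = 1 := by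
  rcases hσ with h | h <;> subst h <;> simp

lemma cos_bound {x : ℝ} (h0 : 0 ≤ x) (h1 : x ≤ 1) :
    -(Real.sqrt 2) / 2 ≤ Real.cos (3 * Real.pi / 4 * x) := by
  have hπ := Real.pi_pos
  have hc34 : Real.cos (3 * Real.pi / 4) = -(Real.sqrt 2 / 2) := by
    rw [show (3 * Real.pi / 4 : ℝ) = Real.pi - Real.pi / 4 by ring, Real.cos_pi_sub,
      Real.cos_pi_div_four]
  have h2 : Real.cos (3 * Real.pi / 4) ≤ Real.cos (3 * Real.pi / 4 * x) := by
    apply Real.cos_le_cos_of_nonneg_of_le_pi (by positivity) (by nlinarith) (by nlinarith)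
  rw [hc34] at h2
  linarith

lemma den_lb' {σ lam t₀ ρ s : ℝ} (hσ : σ = 1 ∨ σ = -1) (h0 : 0 < ρ) (h1 : ρ ≤ 1)
    (hs : 0 ≤ s) (hr : 0 ≤ lam * t₀ ^ ρ) :
    s / 2 ≤ ‖(s : ℂ) * Complex.exp ((σ : ℂ) * (Complex.I * ((3 * Real.pi / 4 : ℝ) : ℂ) * (ρ : ℂ))) +
        ((lam * t₀ ^ ρ : ℝ) : ℂ)‖ ∧
    lam * t₀ ^ ρ / 2 ≤ ‖(s : ℂ) *
        Complex.exp ((σ : ℂ) * (Complex.I * ((3 * Real.pi / 4 : ℝ) : ℂ) * (ρ : ℂ))) +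
        ((lam * t₀ ^ ρ : ℝ) : ℂ)‖ := by
  have harg : (σ : ℂ) * (Complex.I * ((3 * Real.pi / 4 : ℝ) : ℂ) * (ρ : ℂ)) =
      Complex.I * ((σ * (3 * Real.pi / 4 * ρ) : ℝ) : ℂ) := by push_cast; ring
  rw [harg]
  apply den_lb hs hr
  have hcc : Real.cos (σ * (3 * Real.pi / 4 * ρ)) = Real.cos (3 * Real.pi / 4 * ρ) := by
    rcases hσ with h | h <;> subst h <;> simp [neg_one_mul, Real.cos_neg]
  rw [hcc]
  exact cos_bound h0.le h1



lemma norm_exp_eq_one {z : ℂ} (y : ℝ) (h : z = (y : ℂ) * Complex.I) :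
    ‖Complex.exp z‖ = 1 := by
  rw [h, show (y : ℂ) * Complex.I = ((0 : ℝ) : ℂ) + (y : ℂ) * Complex.I by simp,
    norm_exp_re, Real.exp_zero]

lemma norm_exp_term (σ u : ℝ) :
    ‖Complex.exp (((σ : ℂ) * Complex.I - 1) * ((u : ℝ) : ℂ) / ((Real.sqrt 2 : ℝ) : ℂ))‖ =
      Real.exp (-(u / Real.sqrt 2)) := by
  have h : ((σ : ℂ) * Complex.I - 1) * ((u : ℝ) : ℂ) / ((Real.sqrt 2 : ℝ) : ℂ) =
      ((-(u / Real.sqrt 2) : ℝ) : ℂ) + ((σ * u / Real.sqrt 2 : ℝ) : ℂ) * Complex.I := by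
    push_cast; ring
  rw [h, norm_exp_re]

lemma norm_pre {σ lam t₀ ρ : ℝ} (hρ : 0 < ρ) (hl : 0 < lam) (ht : 0 < t₀) :
    ‖pre σ lam t₀ ρ‖ = 1 / (2 * Real.pi * ρ * (lam ^ 2 * t₀ ^ (ρ + 1))) := by
  have hπ := Real.pi_pos
  have hW : (0:ℝ) < lam ^ 2 * t₀ ^ (ρ + 1) := by positivity
  unfold pre
  rw [norm_div, norm_mul,
    norm_exp_eq_one (σ * (3 * Real.pi / 4)) (by push_cast; ring),
    norm_exp_eq_one (σ * (2 * (3 * Real.pi / 4) * ρ)) (by push_cast; ring)]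
  have hden : ‖2 * ((Real.pi : ℝ) : ℂ) * Complex.I * (ρ : ℂ) *
      ((lam ^ 2 * t₀ ^ (ρ + 1) : ℝ) : ℂ)‖ = 2 * Real.pi * ρ * (lam ^ 2 * t₀ ^ (ρ + 1)) := by
    simp only [norm_mul, Complex.norm_real, Real.norm_eq_abs, Complex.norm_I, Complex.norm_two]
    rw [abs_of_pos hπ, abs_of_pos hρ, abs_of_pos (by positivity : (0:ℝ) < lam ^ 2),
      abs_of_pos (by positivity : (0:ℝ) < t₀ ^ (ρ + 1))]
    ring
  rw [hden, one_mul]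

lemma norm_preD_le {σ lam t₀ ρ : ℝ} (hσ : σ = 1 ∨ σ = -1) (hρ : 0 < ρ) (hl : 0 < lam)
    (ht : 1 ≤ t₀) :
    ‖preD σ lam t₀ ρ‖ ≤ 1 / (2 * Real.pi * ρ * (lam ^ 2 * t₀ ^ (ρ + 1))) *
      (3 * Real.pi / 2 + (1 / ρ + Real.log t₀)) := by
  have ht0 : (0:ℝ) < t₀ := lt_of_lt_of_le one_pos ht
  have hπ := Real.pi_pos
  have hLt : 0 ≤ Real.log t₀ := Real.log_nonneg ht
  unfold preD
  rw [norm_mul, norm_pre hρ hl ht0]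
  apply mul_le_mul_of_nonneg_left _ (by positivity)
  refine le_trans (norm_sub_le _ _) ?_
  have h1 : ‖(σ : ℂ) * (2 * Complex.I * ((3 * Real.pi / 4 : ℝ) : ℂ))‖ = 3 * Real.pi / 2 := by
    rw [norm_mul, norm_sigma hσ, norm_mul, norm_mul, Complex.norm_I]
    simp only [Complex.norm_two, Complex.norm_real, Real.norm_eq_abs]
    rw [abs_of_pos (by positivity : (0:ℝ) < 3 * Real.pi / 4)]
    ring
  have h2 : ‖1 / ((ρ : ℝ) : ℂ) + ((Real.log t₀ : ℝ) : ℂ)‖ ≤ 1 / ρ + Real.log t₀ := by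
    refine le_trans (norm_add_le _ _) ?_
    rw [norm_div, norm_one]
    simp only [Complex.norm_real, Real.norm_eq_abs]
    rw [abs_of_pos hρ, _root_.abs_of_nonneg hLt]
  rw [h1]
  linarith

lemma norm_ig_le {σ lam t₀ ρ s m : ℝ} (hσ : σ = 1 ∨ σ = -1) (hρ0 : 0 < ρ) (hρ1 : ρ ≤ 1)
    (hm : 1 / ρ ≤ m) (hs : 1 ≤ s) (hl : 0 < lam) (ht : 1 ≤ t₀) :
    ‖ig σ lam t₀ ρ s‖ ≤
      2 * (s ^ (m + 1) * Real.exp (-(s / Real.sqrt 2))) / (lam * t₀ ^ ρ) := by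
  have hs0 : (0:ℝ) < s := by linarith
  have ht0 : (0:ℝ) < t₀ := by linarith
  have hr : (0:ℝ) < lam * t₀ ^ ρ := by positivity
  have hsq : (0:ℝ) < Real.sqrt 2 := by positivity
  obtain ⟨hds, hdr⟩ := den_lb' hσ hρ0 hρ1 hs0.le hr.le
  unfold ig
  rw [norm_div, norm_mul, norm_exp_term]
  have hv : ‖((s ^ (1 / ρ + 1) : ℝ) : ℂ)‖ = s ^ (1 / ρ + 1) := by
    simp only [Complex.norm_real, Real.norm_eq_abs]
    exact abs_of_pos (by positivity)
  rw [hv]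
  have hu1 : s ≤ s ^ (1 / ρ) := by
    nth_rewrite 1 [← Real.rpow_one s]
    refine Real.rpow_le_rpow_of_exponent_le hs ?_
    rw [le_div_iff₀ hρ0]; linarith
  have hnum : Real.exp (-(s ^ (1 / ρ) / Real.sqrt 2)) * s ^ (1 / ρ + 1) ≤
      Real.exp (-(s / Real.sqrt 2)) * s ^ (m + 1) := by
    apply mul_le_mul
    · apply Real.exp_le_exp.2
      rw [neg_le_neg_iff]
      exact div_le_div_of_nonneg_right hu1 hsq.le
    · exact Real.rpow_le_rpow_of_exponent_le hs (by
        have : 1 / ρ ≤ m := hm; linarith)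
    · positivity
    · positivity
  calc Real.exp (-(s ^ (1 / ρ) / Real.sqrt 2)) * s ^ (1 / ρ + 1) /
        ‖(s : ℂ) * Complex.exp ((σ : ℂ) * (Complex.I * ((3 * Real.pi / 4 : ℝ) : ℂ) * (ρ : ℂ))) +
          ((lam * t₀ ^ ρ : ℝ) : ℂ)‖ ≤
      Real.exp (-(s / Real.sqrt 2)) * s ^ (m + 1) / (lam * t₀ ^ ρ / 2) :=
        div_le_div₀ (by positivity) hnum (by positivity) hdr
    _ = 2 * (s ^ (m + 1) * Real.exp (-(s / Real.sqrt 2))) / (lam * t₀ ^ ρ) := by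
        rw [div_div_eq_mul_div]; ring



set_option maxHeartbeats 1000000 in
lemma norm_igd_le {σ lam t₀ ρ s m : ℝ} (hσ : σ = 1 ∨ σ = -1) (hρ0 : 0 < ρ) (hρ1 : ρ ≤ 1)
    (hm : 1 / ρ ≤ m) (hs : 1 ≤ s) (hl : 0 < lam) (ht : 1 ≤ t₀) :
    ‖igd σ lam t₀ ρ s‖ ≤
      4 / ρ ^ 2 * (1 + Real.pi + Real.log t₀) / (lam * t₀ ^ ρ) *
        (s ^ (2 * m + 2) * Real.exp (-(s / Real.sqrt 2))) := by
  have hs0 : (0:ℝ) < s := by linarith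
  have ht0 : (0:ℝ) < t₀ := by linarith
  have hr : (0:ℝ) < lam * t₀ ^ ρ := by positivity
  have hπ := Real.pi_pos
  have hL : 0 ≤ Real.log s := Real.log_nonneg hs
  have hLt : 0 ≤ Real.log t₀ := Real.log_nonneg ht
  have hsq : (0:ℝ) < Real.sqrt 2 := by positivity
  have hm1 : (1:ℝ) ≤ m := le_trans (by rw [le_div_iff₀ hρ0]; linarith) hm
  have hx1 : (1:ℝ) ≤ s ^ (m + 1) := by
    simpa using Real.rpow_le_rpow_of_exponent_le hs (by linarith : (0:ℝ) ≤ m + 1)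
  obtain ⟨hds, hdr⟩ := den_lb' hσ hρ0 hρ1 hs0.le hr.le
  have hD0 : (0:ℝ) < ‖(s : ℂ) *
      Complex.exp ((σ : ℂ) * (Complex.I * ((3 * Real.pi / 4 : ℝ) : ℂ) * (ρ : ℂ))) +
      ((lam * t₀ ^ ρ : ℝ) : ℂ)‖ := lt_of_lt_of_le (by positivity) hds
  unfold igd
  rw [norm_mul]
  -- second factor bound
  have h1 : ‖((σ : ℂ) * Complex.I - 1) * ((-(s ^ (1 / ρ) * Real.log s / ρ ^ 2) : ℝ) : ℂ) /
      ((Real.sqrt 2 : ℝ) : ℂ)‖ = s ^ (1 / ρ) * Real.log s / ρ ^ 2 := by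
    rw [norm_div, norm_mul, norm_c hσ]
    simp only [Complex.norm_real, Real.norm_eq_abs]
    rw [abs_of_pos hsq, abs_neg, _root_.abs_of_nonneg (by positivity), mul_comm,
      mul_div_assoc, div_self (ne_of_gt hsq), mul_one]
  have h2 : ‖((-(Real.log s / ρ ^ 2) : ℝ) : ℂ)‖ = Real.log s / ρ ^ 2 := by
    simp only [Complex.norm_real, Real.norm_eq_abs]
    rw [abs_neg, _root_.abs_of_nonneg (by positivity)]
  have hD'le : ‖(s : ℂ) *
      Complex.exp ((σ : ℂ) * (Complex.I * ((3 * Real.pi / 4 : ℝ) : ℂ) * (ρ : ℂ))) *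
        ((σ : ℂ) * (Complex.I * ((3 * Real.pi / 4 : ℝ) : ℂ))) +
      ((lam * (t₀ ^ ρ * Real.log t₀) : ℝ) : ℂ)‖ ≤
      3 * Real.pi / 4 * s + lam * t₀ ^ ρ * Real.log t₀ := by
    refine le_trans (norm_add_le _ _) ?_
    have ha : ‖(s : ℂ) *
        Complex.exp ((σ : ℂ) * (Complex.I * ((3 * Real.pi / 4 : ℝ) : ℂ) * (ρ : ℂ))) *
        ((σ : ℂ) * (Complex.I * ((3 * Real.pi / 4 : ℝ) : ℂ)))‖ = s * (3 * Real.pi / 4) := by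
      rw [norm_mul, norm_mul, norm_exp_eq_one (σ * (3 * Real.pi / 4 * ρ)) (by push_cast; ring),
        norm_mul, norm_sigma hσ, norm_mul, Complex.norm_I]
      simp only [Complex.norm_real, Real.norm_eq_abs]
      rw [abs_of_pos hs0, abs_of_pos (by positivity : (0:ℝ) < 3 * Real.pi / 4)]
      ring
    have hb : ‖((lam * (t₀ ^ ρ * Real.log t₀) : ℝ) : ℂ)‖ = lam * t₀ ^ ρ * Real.log t₀ := by
      simp only [Complex.norm_real, Real.norm_eq_abs]
      rw [_root_.abs_of_nonneg (by positivity)]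
      ring
    rw [ha, hb]
    linarith
  have h3 : ‖((s : ℂ) *
      Complex.exp ((σ : ℂ) * (Complex.I * ((3 * Real.pi / 4 : ℝ) : ℂ) * (ρ : ℂ))) *
        ((σ : ℂ) * (Complex.I * ((3 * Real.pi / 4 : ℝ) : ℂ))) +
      ((lam * (t₀ ^ ρ * Real.log t₀) : ℝ) : ℂ)) /
      ((s : ℂ) * Complex.exp ((σ : ℂ) * (Complex.I * ((3 * Real.pi / 4 : ℝ) : ℂ) * (ρ : ℂ))) +
      ((lam * t₀ ^ ρ : ℝ) : ℂ))‖ ≤ 3 * Real.pi / 2 + 2 * Real.log t₀ := by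
    rw [norm_div, div_le_iff₀ hD0]
    nlinarith [mul_le_mul_of_nonneg_left hds (by positivity : (0:ℝ) ≤ 3 * Real.pi / 2),
      mul_le_mul_of_nonneg_left hdr (by positivity : (0:ℝ) ≤ 2 * Real.log t₀), hD'le]
  have hbig : ‖((σ : ℂ) * Complex.I - 1) * ((-(s ^ (1 / ρ) * Real.log s / ρ ^ 2) : ℝ) : ℂ) /
        ((Real.sqrt 2 : ℝ) : ℂ) +
      ((-(Real.log s / ρ ^ 2) : ℝ) : ℂ) -
      ((s : ℂ) * Complex.exp ((σ : ℂ) * (Complex.I * ((3 * Real.pi / 4 : ℝ) : ℂ) * (ρ : ℂ))) *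
          ((σ : ℂ) * (Complex.I * ((3 * Real.pi / 4 : ℝ) : ℂ))) +
          ((lam * (t₀ ^ ρ * Real.log t₀) : ℝ) : ℂ)) /
        ((s : ℂ) * Complex.exp ((σ : ℂ) * (Complex.I * ((3 * Real.pi / 4 : ℝ) : ℂ) * (ρ : ℂ))) +
          ((lam * t₀ ^ ρ : ℝ) : ℂ))‖ ≤
      s ^ (1 / ρ) * Real.log s / ρ ^ 2 + Real.log s / ρ ^ 2 +
        (3 * Real.pi / 2 + 2 * Real.log t₀) := by
    refine le_trans (norm_sub_le _ _) ?_
    refine add_le_add (le_trans (norm_add_le _ _) ?_) h3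
    rw [h1, h2]
  -- paren bound
  have hum : s ^ (1 / ρ) ≤ s ^ m := Real.rpow_le_rpow_of_exponent_le hs hm
  have hLs : Real.log s ≤ s := le_trans (Real.log_le_sub_one_of_pos hs0) (by linarith)
  have huL : s ^ (1 / ρ) * Real.log s ≤ s ^ (m + 1) := by
    calc s ^ (1 / ρ) * Real.log s ≤ s ^ m * s :=
          mul_le_mul hum hLs hL (by positivity)
      _ = s ^ (m + 1) := by rw [Real.rpow_add hs0, Real.rpow_one]
  have hsX : Real.log s ≤ s ^ (m + 1) := by
    refine le_trans hLs ?_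
    nth_rewrite 1 [← Real.rpow_one s]
    exact Real.rpow_le_rpow_of_exponent_le hs (by linarith)
  have hq : (1:ℝ) ≤ 1 / ρ ^ 2 := by
    rw [le_div_iff₀ (by positivity)]; nlinarith
  have hpar : s ^ (1 / ρ) * Real.log s / ρ ^ 2 + Real.log s / ρ ^ 2 +
      (3 * Real.pi / 2 + 2 * Real.log t₀) ≤
      2 / ρ ^ 2 * (1 + Real.pi + Real.log t₀) * s ^ (m + 1) := by
    have hρ2 : (0:ℝ) < ρ ^ 2 := by positivity
    have p3 : (1:ℝ) ≤ s ^ (m + 1) * (1 / ρ ^ 2) := by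
      nlinarith
    have p4 : 2 * Real.pi * 1 ≤ 2 * Real.pi * (s ^ (m + 1) * (1 / ρ ^ 2)) :=
      mul_le_mul_of_nonneg_left p3 (by positivity)
    have p5 : 2 * Real.log t₀ * 1 ≤ 2 * Real.log t₀ * (s ^ (m + 1) * (1 / ρ ^ 2)) :=
      mul_le_mul_of_nonneg_left p3 (by positivity)
    have p1 : s ^ (1 / ρ) * Real.log s * (1 / ρ ^ 2) ≤ s ^ (m + 1) * (1 / ρ ^ 2) :=
      mul_le_mul_of_nonneg_right huL (by positivity)
    have p2 : Real.log s * (1 / ρ ^ 2) ≤ s ^ (m + 1) * (1 / ρ ^ 2) :=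
      mul_le_mul_of_nonneg_right hsX (by positivity)
    have e1 : s ^ (1 / ρ) * Real.log s / ρ ^ 2 = s ^ (1 / ρ) * Real.log s * (1 / ρ ^ 2) := by
      ring
    have e2 : Real.log s / ρ ^ 2 = Real.log s * (1 / ρ ^ 2) := by ring
    have e3 : 2 / ρ ^ 2 * (1 + Real.pi + Real.log t₀) * s ^ (m + 1) =
        2 * (s ^ (m + 1) * (1 / ρ ^ 2)) + 2 * Real.pi * (s ^ (m + 1) * (1 / ρ ^ 2)) +
          2 * Real.log t₀ * (s ^ (m + 1) * (1 / ρ ^ 2)) := by ring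
    rw [e1, e2, e3]
    nlinarith [p1, p2, p3, p4, p5]
  have hig := norm_ig_le hσ hρ0 hρ1 hm hs hl ht
  have hss : s ^ (m + 1) * s ^ (m + 1) = s ^ (2 * m + 2) := by
    rw [← Real.rpow_add hs0]; ring_nf
  refine le_trans (mul_le_mul hig hbig (norm_nonneg _) (by positivity)) ?_
  refine le_trans (mul_le_mul_of_nonneg_left hpar (by positivity)) ?_
  have goal_eq : 2 * (s ^ (m + 1) * Real.exp (-(s / Real.sqrt 2))) / (lam * t₀ ^ ρ) *
      (2 / ρ ^ 2 * (1 + Real.pi + Real.log t₀) * s ^ (m + 1)) =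
      4 / ρ ^ 2 * (1 + Real.pi + Real.log t₀) / (lam * t₀ ^ ρ) *
        (s ^ (2 * m + 2) * Real.exp (-(s / Real.sqrt 2))) := by
    rw [← hss]
    field_simp
    ring
  rw [goal_eq]


lemma integrable_base {p : ℝ} (hp : -1 < p) :
    IntegrableOn (fun s : ℝ => s ^ p * Real.exp (-(s / Real.sqrt 2))) (Ioi 1) := by
  have hb : (0:ℝ) < (Real.sqrt 2)⁻¹ := by positivity
  have h := integrableOn_rpow_mul_exp_neg_mul_rpow (p := 1) (s := p)
    (b := (Real.sqrt 2)⁻¹) hp zero_lt_one hb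
  have heq : (fun x : ℝ => x ^ p * Real.exp (-(Real.sqrt 2)⁻¹ * x ^ (1:ℝ))) =
      fun x : ℝ => x ^ p * Real.exp (-(x / Real.sqrt 2)) := by
    funext x
    rw [Real.rpow_one]
    congr 1
    ring
  rw [heq] at h
  exact h.mono_set (Ioi_subset_Ioi zero_le_one)


variable {σ lam t₀ ρ : ℝ}

lemma contOn_ig (hσ : σ = 1 ∨ σ = -1) (h0 : 0 < ρ) (h1 : ρ ≤ 1) (hl : 0 < lam) (ht : 0 < t₀)
    (hne : ∀ s : ℝ, s ∈ Ioi (1:ℝ) →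
      (s : ℂ) * Complex.exp ((σ : ℂ) * (Complex.I * ((3 * Real.pi / 4 : ℝ) : ℂ) * (ρ : ℂ))) +
        ((lam * t₀ ^ ρ : ℝ) : ℂ) ≠ 0) :
    ContinuousOn (fun s => ig σ lam t₀ ρ s) (Ioi (1:ℝ)) := by
  have hrp1 : ContinuousOn (fun s : ℝ => s ^ (1/ρ)) (Ioi (1:ℝ)) :=
    continuousOn_id.rpow_const fun x hx => Or.inl (by
      have : (1:ℝ) < x := hx
      positivity)
  have hrp2 : ContinuousOn (fun s : ℝ => s ^ (1/ρ + 1)) (Ioi (1:ℝ)) :=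
    continuousOn_id.rpow_const fun x hx => Or.inl (by
      have : (1:ℝ) < x := hx
      positivity)
  apply ContinuousOn.div
  · apply ContinuousOn.mul
    · apply Complex.continuous_exp.comp_continuousOn
      apply ContinuousOn.div_const
      exact continuousOn_const.mul (Complex.continuous_ofReal.comp_continuousOn hrp1)
    · exact Complex.continuous_ofReal.comp_continuousOn hrp2
  · exact ((Complex.continuous_ofReal.mul continuous_const).add continuous_const).continuousOn
  · exact hne

lemma contOn_igd (hσ : σ = 1 ∨ σ = -1) (h0 : 0 < ρ) (h1 : ρ ≤ 1) (hl : 0 < lam) (ht : 0 < t₀)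
    (hne : ∀ s : ℝ, s ∈ Ioi (1:ℝ) →
      (s : ℂ) * Complex.exp ((σ : ℂ) * (Complex.I * ((3 * Real.pi / 4 : ℝ) : ℂ) * (ρ : ℂ))) +
        ((lam * t₀ ^ ρ : ℝ) : ℂ) ≠ 0) :
    ContinuousOn (fun s => igd σ lam t₀ ρ s) (Ioi (1:ℝ)) := by
  have hrp1 : ContinuousOn (fun s : ℝ => s ^ (1/ρ)) (Ioi (1:ℝ)) :=
    continuousOn_id.rpow_const fun x hx => Or.inl (by
      have : (1:ℝ) < x := hx
      positivity)
  have hlog : ContinuousOn Real.log (Ioi (1:ℝ)) :=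
    Real.continuousOn_log.mono fun x hx => by
      have : (1:ℝ) < x := hx
      simp only [mem_compl_iff, mem_singleton_iff]
      intro h; rw [h] at this; linarith
  apply ContinuousOn.mul
  · exact contOn_ig hσ h0 h1 hl ht hne
  · apply ContinuousOn.sub
    · apply ContinuousOn.add
      · apply ContinuousOn.div_const
        apply continuousOn_const.mul
        apply Complex.continuous_ofReal.comp_continuousOn
        apply ContinuousOn.neg
        apply ContinuousOn.div_const
        exact hrp1.mul hlog
      · apply Complex.continuous_ofReal.comp_continuousOn
        apply ContinuousOn.neg
        apply ContinuousOn.div_const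
        exact hlog
    · apply ContinuousOn.div
      · apply ContinuousOn.add
        · exact (((Complex.continuous_ofReal.mul continuous_const).mul
            continuous_const)).continuousOn
        · exact continuousOn_const
      · exact ((Complex.continuous_ofReal.mul continuous_const).add continuous_const).continuousOn
      · exact hne


end St13

namespace St13

open Set

lemma norm_ig_le2 {σ lam t₀ ρ s m Q : ℝ} (hσ : σ = 1 ∨ σ = -1) (hQ : 0 < Q) (hQρ : Q ≤ ρ)
    (hρ1 : ρ ≤ 1) (hm : 1 / ρ ≤ m) (hs : 1 ≤ s) (hl : 0 < lam) (ht : 1 ≤ t₀) :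
    ‖ig σ lam t₀ ρ s‖ ≤ 2 / (lam * t₀ ^ Q) * (s ^ (2 * m + 2) * Real.exp (-(s / Real.sqrt 2))) := by
  have hρ0 : 0 < ρ := lt_of_lt_of_le hQ hQρ
  have hs0 : (0:ℝ) < s := by linarith
  have ht0 : (0:ℝ) < t₀ := by linarith
  have hm0 : (0:ℝ) < m := lt_of_lt_of_le (by positivity) hm
  refine le_trans (norm_ig_le hσ hρ0 hρ1 hm hs hl ht) ?_
  rw [div_mul_eq_mul_div]
  have h1 : s ^ (m + 1) ≤ s ^ (2 * m + 2) :=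
    Real.rpow_le_rpow_of_exponent_le hs (by linarith)
  have h2 : lam * t₀ ^ Q ≤ lam * t₀ ^ ρ :=
    mul_le_mul_of_nonneg_left (Real.rpow_le_rpow_of_exponent_le ht hQρ) hl.le
  apply div_le_div₀ (by positivity) _ (by positivity) h2
  have he : (0:ℝ) ≤ Real.exp (-(s / Real.sqrt 2)) := (Real.exp_pos _).le
  nlinarith [h1, he, Real.rpow_nonneg hs0.le (m+1)]

lemma norm_igd_le2 {σ lam t₀ ρ s m Q : ℝ} (hσ : σ = 1 ∨ σ = -1) (hQ : 0 < Q) (hQρ : Q ≤ ρ)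
    (hρ1 : ρ ≤ 1) (hm : 1 / ρ ≤ m) (hs : 1 ≤ s) (hl : 0 < lam) (ht : 1 ≤ t₀) :
    ‖igd σ lam t₀ ρ s‖ ≤ 4 / Q ^ 2 * (1 + Real.pi + Real.log t₀) / (lam * t₀ ^ Q) *
      (s ^ (2 * m + 2) * Real.exp (-(s / Real.sqrt 2))) := by
  have hρ0 : 0 < ρ := lt_of_lt_of_le hQ hQρ
  have ht0 : (0:ℝ) < t₀ := by linarith
  have hπ := Real.pi_pos
  have hLt : (0:ℝ) ≤ Real.log t₀ := Real.log_nonneg ht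
  refine le_trans (norm_igd_le hσ hρ0 hρ1 hm hs hl ht) ?_
  apply mul_le_mul_of_nonneg_right _ (by positivity)
  apply div_le_div₀ (by positivity) _ (by positivity)
    (mul_le_mul_of_nonneg_left (Real.rpow_le_rpow_of_exponent_le ht hQρ) hl.le)
  apply mul_le_mul_of_nonneg_right _ (by positivity)
  apply div_le_div₀ (by positivity) le_rfl (by positivity)
  nlinarith [hQ, hQρ]

lemma hasDerivAt_intg {σ lam t₀ ρ Q : ℝ} (hσ : σ = 1 ∨ σ = -1) (hQ : 0 < Q) (hQρ : Q < ρ)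
    (hρ1 : ρ < 1) (hl : 0 < lam) (ht : 1 ≤ t₀) :
    HasDerivAt (fun x => ∫ s in Ioi (1:ℝ), ig σ lam t₀ x s)
      (∫ s in Ioi (1:ℝ), igd σ lam t₀ ρ s) ρ := by
  have ht0 : (0:ℝ) < t₀ := by linarith
  have hπ := Real.pi_pos
  set ε := min (ρ - Q) ((1 - ρ) / 2) with hεdef
  have hε0 : 0 < ε := lt_min (by linarith) (by linarith)
  have hball : ∀ x ∈ Metric.ball ρ ε, Q < x ∧ x < 1 := by
    intro x hx
    rw [Metric.mem_ball, Real.dist_eq, abs_lt] at hx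
    have h1 := min_le_left (ρ - Q) ((1 - ρ) / 2)
    have h2 := min_le_right (ρ - Q) ((1 - ρ) / 2)
    constructor
    · linarith [hx.1]
    · linarith [hx.2]
  have hne : ∀ x : ℝ, 0 < x → x ≤ 1 → ∀ s : ℝ, s ∈ Ioi (1:ℝ) →
      (s : ℂ) * Complex.exp ((σ : ℂ) * (Complex.I * ((3 * Real.pi / 4 : ℝ) : ℂ) * (x : ℂ))) +
        ((lam * t₀ ^ x : ℝ) : ℂ) ≠ 0 := by
    intro x hx0 hx1 s hs
    have hs1 : (1:ℝ) < s := hs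
    have hr : (0:ℝ) ≤ lam * t₀ ^ x := by positivity
    have hlb := (den_lb' (s := s) hσ hx0 hx1 (by linarith) hr).1
    intro h
    rw [h, norm_zero] at hlb
    linarith
  have hmQ : ∀ x : ℝ, Q < x → 1 / x ≤ 1 / Q := by
    intro x hx
    apply one_div_le_one_div_of_le hQ hx.le
  have hexp : (-1:ℝ) < 2 * (1 / Q) + 2 := by
    have : (0:ℝ) < 1 / Q := by positivity
    linarith
  have key := hasDerivAt_integral_of_dominated_loc_of_deriv_le
    (μ := volume.restrict (Ioi 1)) (F := fun x s => ig σ lam t₀ x s)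
    (F' := fun x s => igd σ lam t₀ x s) (x₀ := ρ)
    (bound := fun s => 4 / Q ^ 2 * (1 + Real.pi + Real.log t₀) / (lam * t₀ ^ Q) *
      (s ^ (2 * (1 / Q) + 2) * Real.exp (-(s / Real.sqrt 2))))
    (Metric.ball_mem_nhds ρ hε0) ?_ ?_ ?_ ?_ ?_ ?_
  · exact key.2
  · filter_upwards [Metric.ball_mem_nhds ρ hε0] with x hx
    obtain ⟨h1, h2⟩ := hball x hx
    exact (contOn_ig hσ (lt_trans hQ h1) h2.le hl ht0
      (hne x (lt_trans hQ h1) h2.le)).aestronglyMeasurable measurableSet_Ioi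
  · apply Integrable.mono' ((integrable_base hexp).const_mul (2 / (lam * t₀ ^ Q)))
    · exact (contOn_ig hσ (lt_trans hQ hQρ) hρ1.le hl ht0
        (hne ρ (lt_trans hQ hQρ) hρ1.le)).aestronglyMeasurable measurableSet_Ioi
    · rw [ae_restrict_iff' measurableSet_Ioi]
      apply ae_of_all
      intro s hs
      exact norm_ig_le2 hσ hQ hQρ.le hρ1.le (hmQ ρ hQρ) (le_of_lt hs) hl ht
  · exact (contOn_igd hσ (lt_trans hQ hQρ) hρ1.le hl ht0
      (hne ρ (lt_trans hQ hQρ) hρ1.le)).aestronglyMeasurable measurableSet_Ioi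
  · rw [ae_restrict_iff' measurableSet_Ioi]
    apply ae_of_all
    intro s hs x hx
    obtain ⟨h1, h2⟩ := hball x hx
    exact norm_igd_le2 hσ hQ h1.le h2.le (hmQ x h1) (le_of_lt hs) hl ht
  · exact (integrable_base hexp).const_mul _
  · rw [ae_restrict_iff' measurableSet_Ioi]
    apply ae_of_all
    intro s hs x hx
    obtain ⟨h1, h2⟩ := hball x hx
    exact hasDerivAt_ig s (lt_trans hQ h1) (le_of_lt hs) hl ht0
      (hne x (lt_trans hQ h1) h2.le s hs)

end St13

namespace St13

open Set

lemma abstract3 (K piv ρv L W r : ℝ) (hπ : piv ≠ 0) (hρ : ρv ≠ 0) (hW : W ≠ 0) (hr : r ≠ 0) :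
    1 / (2 * piv * ρv * W) * (3 * piv / 2 + (1 / ρv + L)) * (2 / r * K) +
      1 / (2 * piv * ρv * W) * (4 / ρv ^ 2 * (1 + piv + L) / r * K) =
    K * (1 / ρv) * (3 * piv + 2 * (1 / ρv) + 2 * L + 4 * (1 / ρv) ^ 2 * (1 + piv + L)) /
      (2 * piv * (W * r)) := by
  field_simp
  ring

noncomputable def Kval (ρ₀ : ℝ) : ℝ :=
  ∫ s in Ioi (1:ℝ), s ^ (2 * (2 / ρ₀) + 2) * Real.exp (-(s / Real.sqrt 2))

noncomputable def Cval (ρ₀ : ℝ) : ℝ :=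
  Kval ρ₀ * (1 / ρ₀) *
    (3 * Real.pi + 2 + 4 * (1 + Real.pi) * (1 / ρ₀) + 4 * (1 / ρ₀) ^ 2) / (2 * Real.pi) + 1

lemma Kval_nonneg (ρ₀ : ℝ) : 0 ≤ Kval ρ₀ :=
  setIntegral_nonneg measurableSet_Ioi fun s hs => by
    have : (1:ℝ) < s := hs
    positivity

lemma Cval_pos {ρ₀ : ℝ} (hρ₀ : ρ₀ ∈ Set.Ioo (0:ℝ) 1) : 0 < Cval ρ₀ := by
  obtain ⟨h0, h1⟩ := hρ₀
  have hπ := Real.pi_pos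
  have hK := Kval_nonneg ρ₀
  have h2 : 0 ≤ Kval ρ₀ * (1 / ρ₀) *
      (3 * Real.pi + 2 + 4 * (1 + Real.pi) * (1 / ρ₀) + 4 * (1 / ρ₀) ^ 2) / (2 * Real.pi) := by
    apply div_nonneg _ (by positivity)
    apply mul_nonneg (mul_nonneg hK (by positivity)) (by positivity)
  unfold Cval
  linarith

lemma key {ρ₀ σ lam t₀ ρ : ℝ} (hρ₀ : ρ₀ ∈ Set.Ioo (0:ℝ) 1) (hσ : σ = 1 ∨ σ = -1)
    (ht : 2 ≤ t₀) (hl : 0 < lam) (hρ : ρ ∈ Set.Ico ρ₀ 1) :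
    ∃ d : ℂ, HasDerivAt (fun x => pre σ lam t₀ x * ∫ s in Ioi (1:ℝ), ig σ lam t₀ x s) d ρ ∧
      ‖d‖ ≤ Cval ρ₀ * (1 / ρ + Real.log t₀) / (lam ^ 3 * t₀ ^ (2 * ρ + 1)) := by
  obtain ⟨hρ₀0, hρ₀1⟩ := hρ₀
  obtain ⟨hρl, hρu⟩ := hρ
  have hρ0 : 0 < ρ := lt_of_lt_of_le hρ₀0 hρl
  have ht1 : (1:ℝ) ≤ t₀ := by linarith
  have ht0 : (0:ℝ) < t₀ := by linarith
  have hπ := Real.pi_pos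
  have hLt : 0 ≤ Real.log t₀ := Real.log_nonneg ht1
  have hQ : 0 < ρ₀ / 2 := by linarith
  have hQρ : ρ₀ / 2 < ρ := by linarith
  have hP := hasDerivAt_pre (σ := σ) hρ0 hl ht0
  have hI := hasDerivAt_intg hσ hQ hQρ hρu hl ht1
  have hd := hP.mul hI
  refine ⟨_, hd, ?_⟩
  have hMρ : 1 / ρ₀ ≤ 2 / ρ₀ := by
    have h2 : 0 < 1 / ρ₀ := by positivity
    have : 2 / ρ₀ = 2 * (1 / ρ₀) := by ring
    linarith [this]
  have hminv : 1 / ρ ≤ 2 / ρ₀ := by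
    have h1 : 1 / ρ ≤ 1 / ρ₀ := one_div_le_one_div_of_le hρ₀0 hρl
    have h2 : 0 < 1 / ρ₀ := by positivity
    have h3 : 2 / ρ₀ = 2 * (1 / ρ₀) := by ring
    linarith
  have hexp : (-1:ℝ) < 2 * (2 / ρ₀) + 2 := by
    have : (0:ℝ) < 2 / ρ₀ := by positivity
    linarith
  -- bound on the integral of ig
  have hIb : ‖∫ s in Ioi (1:ℝ), ig σ lam t₀ ρ s‖ ≤ 2 / (lam * t₀ ^ ρ) * Kval ρ₀ := by
    have h := norm_integral_le_of_norm_le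
      ((integrable_base hexp).const_mul (2 / (lam * t₀ ^ ρ)))
      (by
        rw [ae_restrict_iff' measurableSet_Ioi]
        apply ae_of_all
        intro s hs
        exact norm_ig_le2 hσ hρ0 le_rfl hρu.le hminv (le_of_lt hs) hl ht1)
    refine le_trans h ?_
    rw [MeasureTheory.integral_const_mul]
    rfl
  -- bound on the integral of igd
  have hI'b : ‖∫ s in Ioi (1:ℝ), igd σ lam t₀ ρ s‖ ≤
      4 / ρ ^ 2 * (1 + Real.pi + Real.log t₀) / (lam * t₀ ^ ρ) * Kval ρ₀ := by
    have h := norm_integral_le_of_norm_le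
      ((integrable_base hexp).const_mul
        (4 / ρ ^ 2 * (1 + Real.pi + Real.log t₀) / (lam * t₀ ^ ρ)))
      (by
        rw [ae_restrict_iff' measurableSet_Ioi]
        apply ae_of_all
        intro s hs
        exact norm_igd_le2 hσ hρ0 le_rfl hρu.le hminv (le_of_lt hs) hl ht1)
    refine le_trans h ?_
    rw [MeasureTheory.integral_const_mul]
    rfl
  have hnormP : ‖pre σ lam t₀ ρ‖ = 1 / (2 * Real.pi * ρ * (lam ^ 2 * t₀ ^ (ρ + 1))) :=
    norm_pre hρ0 hl ht0
  have hnormPD := norm_preD_le hσ hρ0 hl ht1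
  have hKnn : 0 ≤ Kval ρ₀ := Kval_nonneg ρ₀
  have hW : (0:ℝ) < lam ^ 2 * t₀ ^ (ρ + 1) := by positivity
  have hr : (0:ℝ) < lam * t₀ ^ ρ := by positivity
  have hX : (0:ℝ) < lam ^ 3 * t₀ ^ (2 * ρ + 1) := by positivity
  have hWr : lam ^ 2 * t₀ ^ (ρ + 1) * (lam * t₀ ^ ρ) = lam ^ 3 * t₀ ^ (2 * ρ + 1) := by
    have hz : t₀ ^ (ρ + 1) * t₀ ^ ρ = t₀ ^ (2 * ρ + 1) := by
      rw [← Real.rpow_add ht0]; ring_nf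
    calc lam ^ 2 * t₀ ^ (ρ + 1) * (lam * t₀ ^ ρ) =
        lam ^ 3 * (t₀ ^ (ρ + 1) * t₀ ^ ρ) := by ring
      _ = lam ^ 3 * t₀ ^ (2 * ρ + 1) := by rw [hz]
  -- first norm estimate
  have step1 : ‖preD σ lam t₀ ρ * (∫ s in Ioi (1:ℝ), ig σ lam t₀ ρ s) +
      pre σ lam t₀ ρ * (∫ s in Ioi (1:ℝ), igd σ lam t₀ ρ s)‖ ≤
      1 / (2 * Real.pi * ρ * (lam ^ 2 * t₀ ^ (ρ + 1))) *
          (3 * Real.pi / 2 + (1 / ρ + Real.log t₀)) * (2 / (lam * t₀ ^ ρ) * Kval ρ₀) +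
        1 / (2 * Real.pi * ρ * (lam ^ 2 * t₀ ^ (ρ + 1))) *
          (4 / ρ ^ 2 * (1 + Real.pi + Real.log t₀) / (lam * t₀ ^ ρ) * Kval ρ₀) := by
    refine le_trans (norm_add_le _ _) ?_
    rw [norm_mul, norm_mul]
    refine add_le_add (mul_le_mul hnormPD hIb (norm_nonneg _) (by positivity)) ?_
    rw [hnormP]
    exact mul_le_mul_of_nonneg_left hI'b (by positivity)
  refine le_trans step1 ?_
  rw [abstract3 _ _ _ _ _ _ (ne_of_gt hπ) (ne_of_gt hρ0) (ne_of_gt hW) (ne_of_gt hr), hWr]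
  -- final real-number estimate
  set K := Kval ρ₀ with hKdef
  set L := Real.log t₀ with hLdef
  set R := 1 / ρ with hRdef
  set M := 1 / ρ₀ with hMdef
  have hR1 : 1 ≤ R := by
    rw [hRdef, le_div_iff₀ hρ0]; linarith
  have hRM : R ≤ M := one_div_le_one_div_of_le hρ₀0 hρl
  have hM1 : 1 ≤ M := by
    rw [hMdef, le_div_iff₀ hρ₀0]; linarith
  have hbrnn : 0 ≤ 3 * Real.pi + 2 * R + 2 * L + 4 * R ^ 2 * (1 + Real.pi + L) := by positivity
  have hbr : 3 * Real.pi + 2 * R + 2 * L + 4 * R ^ 2 * (1 + Real.pi + L) ≤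
      (3 * Real.pi + 2 + 4 * (1 + Real.pi) * M + 4 * M ^ 2) * (R + L) := by
    nlinarith [mul_nonneg (sub_nonneg.2 hRM) (by linarith : (0:ℝ) ≤ R),
      mul_nonneg hπ.le (sub_nonneg.2 hR1),
      mul_nonneg (mul_nonneg (sub_nonneg.2 hRM) (by linarith : (0:ℝ) ≤ M + R)) hLt,
      mul_nonneg (mul_nonneg hπ.le (sub_nonneg.2 hRM)) (by linarith : (0:ℝ) ≤ R),
      mul_nonneg hLt (sub_nonneg.2 hR1)]
  have h2 : K * R * (3 * Real.pi + 2 * R + 2 * L + 4 * R ^ 2 * (1 + Real.pi + L)) ≤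
      K * M * ((3 * Real.pi + 2 + 4 * (1 + Real.pi) * M + 4 * M ^ 2) * (R + L)) :=
    mul_le_mul (mul_le_mul_of_nonneg_left hRM hKnn) hbr hbrnn
      (mul_nonneg hKnn (by linarith))
  have h3 : K * M * (3 * Real.pi + 2 + 4 * (1 + Real.pi) * M + 4 * M ^ 2) / (2 * Real.pi) ≤
      Cval ρ₀ := by
    unfold Cval
    rw [← hKdef, ← hMdef]
    linarith
  have hSnn : (0:ℝ) ≤ R + L := by linarith
  calc K * R * (3 * Real.pi + 2 * R + 2 * L + 4 * R ^ 2 * (1 + Real.pi + L)) /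
        (2 * Real.pi * (lam ^ 3 * t₀ ^ (2 * ρ + 1))) =
      K * R * (3 * Real.pi + 2 * R + 2 * L + 4 * R ^ 2 * (1 + Real.pi + L)) / (2 * Real.pi) /
        (lam ^ 3 * t₀ ^ (2 * ρ + 1)) := by
        rw [div_div]
    _ ≤ K * M * ((3 * Real.pi + 2 + 4 * (1 + Real.pi) * M + 4 * M ^ 2) * (R + L)) /
        (2 * Real.pi) / (lam ^ 3 * t₀ ^ (2 * ρ + 1)) := by
        apply div_le_div_of_nonneg_right _ hX.le
        exact div_le_div_of_nonneg_right h2 (by positivity)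
    _ = (K * M * (3 * Real.pi + 2 + 4 * (1 + Real.pi) * M + 4 * M ^ 2) / (2 * Real.pi)) *
        (R + L) / (lam ^ 3 * t₀ ^ (2 * ρ + 1)) := by ring
    _ ≤ Cval ρ₀ * (R + L) / (lam ^ 3 * t₀ ^ (2 * ρ + 1)) :=
        div_le_div_of_nonneg_right (mul_le_mul_of_nonneg_right h3 hSnn) hX.le

end St13


/-- For every `ρ₀ ∈ (0,1)` and `λ₁ > 0` there exist `C > 0` and `T₀ > 1` such that for all
`t₀ ≥ T₀`, `λ ≥ λ₁` and `ρ ∈ [ρ₀, 1)`, both `f₂₊` and `f₂₋` are differentiable at `ρ` and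
`|f₂±'(ρ)| ≤ C (1/ρ + ln t₀) / (λ³ t₀^{2ρ+1})`. -/
theorem statement13 (ρ₀ : ℝ) (hρ₀ : ρ₀ ∈ Set.Ioo (0 : ℝ) 1) (lam₁ : ℝ) (hlam₁ : 0 < lam₁) :
    ∃ C : ℝ, 0 < C ∧ ∃ T₀ : ℝ, 1 < T₀ ∧
      ∀ t₀ : ℝ, T₀ ≤ t₀ → ∀ lam : ℝ, lam₁ ≤ lam → ∀ ρ ∈ Set.Ico ρ₀ 1,
        DifferentiableAt ℝ (f2plus lam t₀) ρ ∧
        DifferentiableAt ℝ (f2minus lam t₀) ρ ∧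
        ‖deriv (f2plus lam t₀) ρ‖ ≤ C * (1 / ρ + Real.log t₀) / (lam ^ 3 * t₀ ^ (2 * ρ + 1)) ∧
        ‖deriv (f2minus lam t₀) ρ‖ ≤ C * (1 / ρ + Real.log t₀) / (lam ^ 3 * t₀ ^ (2 * ρ + 1)) := by

  refine ⟨St13.Cval ρ₀, St13.Cval_pos hρ₀, 2, one_lt_two, ?_⟩
  intro t₀ ht lam hlam ρ hρ
  have hl : 0 < lam := lt_of_lt_of_le hlam₁ hlam
  obtain ⟨d₁, hd₁, hb₁⟩ := St13.key (σ := 1) hρ₀ (Or.inl rfl) ht hl hρ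
  obtain ⟨d₂, hd₂, hb₂⟩ := St13.key (σ := -1) hρ₀ (Or.inr rfl) ht hl hρ
  rw [St13.f2plus_eq, St13.f2minus_eq]
  refine ⟨hd₁.differentiableAt, hd₂.differentiableAt, ?_, ?_⟩
  · rw [hd₁.deriv]; exact hb₁
  · rw [hd₂.deriv]; exact hb₂
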